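/- For a unit-area labelled triangle T_z parametrized by z ∈ ℍ, the angle at the a-vertex is π/2 if and only if |z - 1/2| = 1/2; the angle at the b-vertex is π/2 if and only if Re z = 0; and the angle at the c-vertex is π/2 if and only if Re z = 1. -/

import Mathlib

open Complex EuclideanGeometry

/-- For the unit-area labelled triangle `T_z` with vertices `z_a = (2/Im z)^{1/2}·z`,
`z_b = 0`, `z_c = (2/Im z)^{1/2}`: the angle at the `a`-vertex is `π/2` iff
`|z - 1/2| = 1/2`, the angle at the `b`-vertex is `π/2` iff `Re z = 0`, and the angle at
the `c`-vertex is `π/2` iff `Re z = 1`. -/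
theorem right_angle_characterizations (z : ℂ) (hz : 0 < z.im) :
    (EuclideanGeometry.angle (0 : ℂ) ((Real.sqrt (2 / z.im) : ℂ) * z)
        (Real.sqrt (2 / z.im) : ℂ) = Real.pi / 2 ↔ ‖z - 1 / 2‖ = 1 / 2) ∧
    (EuclideanGeometry.angle ((Real.sqrt (2 / z.im) : ℂ) * z) 0
        (Real.sqrt (2 / z.im) : ℂ) = Real.pi / 2 ↔ z.re = 0) ∧
    (EuclideanGeometry.angle ((Real.sqrt (2 / z.im) : ℂ) * z)
        (Real.sqrt (2 / z.im) : ℂ) 0 = Real.pi / 2 ↔ z.re = 1) := by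
  have hs : (0:ℝ) < Real.sqrt (2 / z.im) := Real.sqrt_pos.2 (by positivity)
  have hsne : Real.sqrt (2 / z.im) ^ 2 ≠ 0 := pow_ne_zero 2 hs.ne'
  have habs : ‖z - 1/2‖ ^ 2 = (z.re - 1/2)^2 + z.im^2 := by
    rw [Complex.sq_norm, Complex.normSq_apply]
    simp [Complex.sub_re, Complex.sub_im]
    ring
  refine ⟨?_, ?_, ?_⟩ <;>
    rw [EuclideanGeometry.angle, ← InnerProductGeometry.inner_eq_zero_iff_angle_eq_pi_div_two] <;>
    simp only [vsub_eq_sub, Complex.inner, sub_zero, zero_sub, map_sub, map_mul, map_neg,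
      Complex.conj_ofReal, Complex.mul_re, Complex.mul_im, Complex.sub_re, Complex.sub_im,
      Complex.neg_re, Complex.neg_im, Complex.ofReal_re, Complex.ofReal_im,
      Complex.conj_re, Complex.conj_im]
  · constructor
    · intro h
      have h2 : Real.sqrt (2/z.im) ^ 2 * (z.re^2 - z.re + z.im^2) = 0 := by
        linear_combination h
      have h3 : z.re^2 - z.re + z.im^2 = 0 := (mul_eq_zero.mp h2).resolve_left hsne
      have hA2 : ‖z - 1/2‖ ^ 2 = (1/2)^2 := by rw [habs]; nlinarith
      calc ‖z - 1/2‖ = Real.sqrt (‖z - 1/2‖ ^ 2) :=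
            (Real.sqrt_sq (norm_nonneg _)).symm
        _ = 1/2 := by rw [hA2, Real.sqrt_sq (by norm_num)]
    · intro h
      have hA2 : (z.re - 1/2)^2 + z.im^2 = (1/2)^2 := by rw [← habs, h]
      linear_combination Real.sqrt (2/z.im) ^ 2 * hA2
  · constructor
    · intro h
      have h2 : Real.sqrt (2/z.im) ^ 2 * z.re = 0 := by linear_combination h
      exact (mul_eq_zero.mp h2).resolve_left hsne
    · intro h; rw [h]; ring
  · constructor
    · intro h
      have h2 : Real.sqrt (2/z.im) ^ 2 * (z.re - 1) = 0 := by linear_combination -h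
      have := (mul_eq_zero.mp h2).resolve_left hsne
      linarith
    · intro h; rw [h]; ring
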